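/- Let G be 2-vertex-connected, v ∈ V(G), and S a subset of V(G) not containing v with |S| ≥ 2. Then there exist two paths from v to two distinct vertices of S that are vertex-disjoint except at v (a 'fan' of size 2). -/

import Mathlib

def TwoConnected {V : Type*} (G : SimpleGraph V) : Prop :=
  3 ≤ Nat.card V ∧ ∀ v : V, ((⊤ : G.Subgraph).deleteVerts {v}).coe.Connected

namespace FanAux

open SimpleGraph Walk

variable {V : Type*} {G : SimpleGraph V}

lemma path_append {a b c : V} {p : G.Walk a b} {q : G.Walk b c}
    (hp : p.IsPath) (hq : q.IsPath)
    (h : ∀ x, x ∈ p.support → x ∈ q.support → x = b) : (p.append q).IsPath := by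
  rw [Walk.isPath_def, Walk.support_append, List.nodup_append]
  refine ⟨hp.support_nodup, hq.support_nodup.tail, ?_⟩
  intro x hxp y hxq hxy
  subst hxy
  have hxb : x = b := h x hxp (List.mem_of_mem_tail hxq)
  subst hxb
  have hnd := hq.support_nodup
  rw [Walk.support_eq_cons] at hnd
  exact (List.nodup_cons.mp hnd).1 hxq

lemma takeUntil_dropUntil_inter [DecidableEq V] {a b c : V} {p : G.Walk a b}
    (hp : p.IsPath) (h : c ∈ p.support) :
    ∀ x, x ∈ (p.takeUntil c h).support → x ∈ (p.dropUntil c h).support → x = c := by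
  intro x hx1 hx2
  by_contra hne
  have hp' : ((p.takeUntil c h).append (p.dropUntil c h)).IsPath := by
    rwa [p.take_spec h]
  rw [Walk.isPath_def, Walk.support_append, List.nodup_append] at hp'
  have hx2' : x ∈ (p.dropUntil c h).support.tail := by
    have := (p.dropUntil c h).support_eq_cons
    rw [this] at hx2
    rcases List.mem_cons.mp hx2 with h3 | h3
    · exact absurd h3 hne
    · exact h3
  exact hp'.2.2 x hx1 x hx2' rfl

lemma exists_walk_avoid (hG : TwoConnected G) {a b w : V}
    (ha : a ≠ w) (hb : b ≠ w) : ∃ p : G.Walk a b, w ∉ p.support := by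
  have hconn := hG.2 w
  have haH : a ∈ ((⊤ : G.Subgraph).deleteVerts {w}).verts := by simp [ha]
  have hbH : b ∈ ((⊤ : G.Subgraph).deleteVerts {w}).verts := by simp [hb]
  obtain ⟨q⟩ := hconn.preconnected ⟨a, haH⟩ ⟨b, hbH⟩
  refine ⟨q.map ((⊤ : G.Subgraph).deleteVerts {w}).hom, ?_⟩
  intro hw
  have hw : w ∈ (q.map ((⊤ : G.Subgraph).deleteVerts {w}).hom).support := hw
  rw [Walk.support_map, List.mem_map] at hw
  obtain ⟨⟨x, hx⟩, _, hxw⟩ := hw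
  simp only [Subgraph.deleteVerts_verts, Subgraph.verts_top, Set.mem_diff,
    Set.mem_singleton_iff] at hx
  exact hx.2 hxw

lemma connected (hG : TwoConnected G) [Finite V] : G.Connected := by
  have h3 := hG.1
  have hne : Nonempty V := (Nat.card_pos_iff.mp (by omega)).1
  apply SimpleGraph.Connected.mk
  intro a b
  have hw : ∃ w : V, w ≠ a ∧ w ≠ b := by
    by_contra hc
    push_neg at hc
    have hsub : (Set.univ : Set V) ⊆ {a, b} := by
      intro x _
      rcases eq_or_ne x a with rfl | hxa
      · exact Set.mem_insert _ _
      · simp [hc x hxa]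
    have h2 : (Set.univ : Set V).ncard ≤ ({a, b} : Set V).ncard :=
      Set.ncard_le_ncard hsub (Set.toFinite _)
    rw [Set.ncard_univ] at h2
    have : ({a, b} : Set V).ncard ≤ 2 := by
      apply le_trans (Set.ncard_insert_le _ _)
      simp [Set.ncard_singleton]
    omega
  obtain ⟨w, hwa, hwb⟩ := hw
  obtain ⟨p, -⟩ := exists_walk_avoid hG hwa.symm hwb.symm
  exact ⟨p⟩

/-- Truncate a walk ending in `S` at its first vertex of `S`. -/
lemma trunc {S : Set V} : ∀ {a b : V} (p : G.Walk a b), p.IsPath → a ∉ S → b ∈ S →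
    ∃ s ∈ S, ∃ q : G.Walk a s, q.IsPath ∧ (∀ x ∈ q.support, x ∈ S → x = s) ∧
      (∀ x ∈ q.support, x ∈ p.support) := by
  intro a b p
  induction p with
  | nil => exact fun _ ha hb => absurd hb ha
  | @cons a c b h p ih =>
    intro hp ha hb
    rw [Walk.cons_isPath_iff] at hp
    by_cases hc : c ∈ S
    · refine ⟨c, hc, Walk.cons h Walk.nil, ?_, ?_, ?_⟩
      · rw [Walk.cons_isPath_iff]
        simp [h.ne]
      · intro x hx hxS
        simp only [Walk.support_cons, Walk.support_nil, List.mem_cons,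
          List.mem_singleton] at hx
        rcases hx with rfl | hx
        · exact absurd hxS ha
        · simpa using hx
      · intro x hx
        simp only [Walk.support_cons, Walk.support_nil, List.mem_cons,
          List.mem_singleton] at hx
        rw [Walk.support_cons, List.mem_cons]
        rcases hx with rfl | hx
        · exact Or.inl rfl
        · rcases hx with rfl | hx
          · exact Or.inr p.start_mem_support
          · simp at hx
    · obtain ⟨s, hs, q, hq, hqS, hqsub⟩ := ih hp.1 hc hb
      refine ⟨s, hs, Walk.cons h q, ?_, ?_, ?_⟩
      · rw [Walk.cons_isPath_iff]
        exact ⟨hq, fun hmem => hp.2 (hqsub a hmem)⟩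
      · intro x hx hxS
        rw [Walk.support_cons, List.mem_cons] at hx
        rcases hx with rfl | hx
        · exact absurd hxS ha
        · exact hqS x hx hxS
      · intro x hx
        rw [Walk.support_cons, List.mem_cons] at hx
        rw [Walk.support_cons, List.mem_cons]
        rcases hx with rfl | hx
        · exact Or.inl rfl
        · exact Or.inr (hqsub x hx)

/-- The suffix of a walk after its last vertex in `T`. -/
lemma last_in_set (T : Set V) : ∀ {a b : V} (p : G.Walk a b),
    ∃ y, (y ∈ T ∨ y = a) ∧ ∃ r : G.Walk y b,
      (∀ x ∈ r.support, x ∈ T → x = y) ∧ (∀ x ∈ r.support, x ∈ p.support) := by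
  intro a b p
  induction p with
  | nil =>
    exact ⟨_, Or.inr rfl, Walk.nil, fun x hx _ => by simpa using hx, fun x hx => hx⟩
  | @cons a c b h p ih =>
    obtain ⟨y, hy, r, hrT, hrsub⟩ := ih
    have hsub : ∀ x ∈ r.support, x ∈ (Walk.cons h p).support := by
      intro x hx
      rw [Walk.support_cons, List.mem_cons]
      exact Or.inr (hrsub x hx)
    rcases hy with hyT | rfl
    · exact ⟨y, Or.inl hyT, r, hrT, hsub⟩
    · by_cases hcT : y ∈ T
      · exact ⟨y, Or.inl hcT, r, hrT, hsub⟩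
      · refine ⟨a, Or.inr rfl, Walk.cons h r, ?_, ?_⟩
        · intro x hx hxT
          rw [Walk.support_cons, List.mem_cons] at hx
          rcases hx with rfl | hx
          · rfl
          · exact absurd ((hrT x hx hxT) ▸ hxT) hcT
        · intro x hx
          rw [Walk.support_cons, List.mem_cons] at hx
          rw [Walk.support_cons, List.mem_cons]
          rcases hx with rfl | hx
          · exact Or.inl rfl
          · exact Or.inr (hrsub x hx)

/-- Case `v` lies on one of the two internally disjoint `u`-`w` paths. -/
lemma auxIn [DecidableEq V] {u w v : V} (A B : G.Walk u w)
    (hA : A.IsPath) (hB : B.IsPath)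
    (hAB : ∀ x, x ∈ A.support → x ∈ B.support → x = u ∨ x = w)
    (hvu : v ≠ u) (hvw : v ≠ w) (hvA : v ∈ A.support) :
    ∃ (p q : G.Walk u v), p.IsPath ∧ q.IsPath ∧
      (∀ x, x ∈ p.support → x ∈ q.support → x = u ∨ x = v) := by
  refine ⟨A.takeUntil v hvA, B.append (A.dropUntil v hvA).reverse, hA.takeUntil hvA, ?_, ?_⟩
  · refine path_append hB ((hA.dropUntil hvA).reverse) ?_
    intro x hxB hxR
    rw [Walk.support_reverse, List.mem_reverse] at hxR
    have hxA : x ∈ A.support := A.support_dropUntil_subset hvA hxR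
    rcases hAB x hxA hxB with rfl | rfl
    · exact absurd (takeUntil_dropUntil_inter hA hvA x
        (A.takeUntil v hvA).start_mem_support hxR) hvu.symm
    · rfl
  · intro x hxT hxQ
    rw [Walk.mem_support_append_iff] at hxQ
    rcases hxQ with hxB | hxR
    · have hxA : x ∈ A.support := A.support_takeUntil_subset hvA hxT
      rcases hAB x hxA hxB with rfl | rfl
      · exact Or.inl rfl
      · exact absurd (takeUntil_dropUntil_inter hA hvA x hxT
          (A.dropUntil v hvA).end_mem_support) hvw.symm
    · rw [Walk.support_reverse, List.mem_reverse] at hxR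
      exact Or.inr (takeUntil_dropUntil_inter hA hvA x hxT hxR)

/-- Case `v` lies on neither path: reroute along `r`. -/
lemma auxOut [DecidableEq V] {u w v y : V} (A B : G.Walk u w)
    (hA : A.IsPath) (hB : B.IsPath)
    (hAB : ∀ x, x ∈ A.support → x ∈ B.support → x = u ∨ x = w)
    (hadj : G.Adj w v) (hvA : v ∉ A.support) (hvB : v ∉ B.support)
    (hyA : y ∈ A.support) (hyw : y ≠ w)
    (r : G.Walk y v) (hr : r.IsPath)
    (hrT : ∀ x ∈ r.support, (x ∈ A.support ∨ x ∈ B.support) → x = y)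
    (hwr : w ∉ r.support) :
    ∃ (p q : G.Walk u v), p.IsPath ∧ q.IsPath ∧
      (∀ x, x ∈ p.support → x ∈ q.support → x = u ∨ x = v) := by
  have hwy : w ∉ (A.takeUntil y hyA).support := by
    intro hx
    exact hyw (takeUntil_dropUntil_inter hA hyA w hx (A.dropUntil y hyA).end_mem_support).symm
  refine ⟨(A.takeUntil y hyA).append r, B.append (Walk.cons hadj Walk.nil), ?_, ?_, ?_⟩
  · refine path_append (hA.takeUntil hyA) hr ?_
    intro x hxT hxr
    exact hrT x hxr (Or.inl (A.support_takeUntil_subset hyA hxT))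
  · refine path_append hB ?_ ?_
    · rw [Walk.cons_isPath_iff]
      exact ⟨Walk.IsPath.nil, by simpa using hadj.ne⟩
    · intro x hxB hxe
      simp only [Walk.support_cons, Walk.support_nil, List.mem_cons,
        List.mem_singleton] at hxe
      rcases hxe with rfl | rfl | h
      · rfl
      · exact absurd hxB hvB
      · simp at h
  · intro x hxP hxQ
    rw [Walk.mem_support_append_iff] at hxP hxQ
    have hxe : x ∈ B.support ∨ x = w ∨ x = v := by
      rcases hxQ with hxB | hxe
      · exact Or.inl hxB
      · simp only [Walk.support_cons, Walk.support_nil, List.mem_cons,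
          List.mem_singleton] at hxe
        rcases hxe with rfl | rfl | h
        · exact Or.inr (Or.inl rfl)
        · exact Or.inr (Or.inr rfl)
        · simp at h
    rcases hxP with hxT | hxr
    · rcases hxe with hxB | hxe
      · rcases hAB x (A.support_takeUntil_subset hyA hxT) hxB with rfl | rfl
        · exact Or.inl rfl
        · exact absurd hxT hwy
      · rcases hxe with rfl | rfl
        · exact absurd hxT hwy
        · exact absurd (A.support_takeUntil_subset hyA hxT) hvA
    · rcases hxe with hxB | hxe
      · have := hrT x hxr (Or.inr hxB)
        subst this
        rcases hAB x hyA hxB with rfl | rfl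
        · exact Or.inl rfl
        · exact absurd rfl hyw
      · rcases hxe with rfl | rfl
        · exact absurd hxr hwr
        · exact Or.inr rfl


/-- Two internally disjoint paths between any two vertices of a 2-connected graph. -/
lemma thmA [Finite V] (hG : TwoConnected G) :
    ∀ n (u v : V), u ≠ v → G.dist u v ≤ n →
    ∃ (p q : G.Walk u v), p.IsPath ∧ q.IsPath ∧
      (∀ x, x ∈ p.support → x ∈ q.support → x = u ∨ x = v) := by
  classical
  have hconn := connected hG
  intro n
  induction n with
  | zero =>
    intro u v huv hd
    exact absurd (hconn.dist_eq_zero_iff.mp (Nat.le_zero.mp hd)) huv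
  | succ n ih =>
    intro u v huv hd
    by_cases hle : G.dist u v ≤ n
    · exact ih u v huv hle
    have hdist : G.dist u v = n + 1 := le_antisymm hd (by omega)
    by_cases hadj : G.Adj u v
    · refine ⟨Walk.cons hadj Walk.nil, Walk.cons hadj Walk.nil, ?_, ?_, ?_⟩
      · rw [Walk.cons_isPath_iff]; exact ⟨Walk.IsPath.nil, by simpa using hadj.ne⟩
      · rw [Walk.cons_isPath_iff]; exact ⟨Walk.IsPath.nil, by simpa using hadj.ne⟩
      · intro x hx _
        simp only [Walk.support_cons, Walk.support_nil, List.mem_cons,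
          List.mem_singleton] at hx
        rcases hx with rfl | rfl | h
        · exact Or.inl rfl
        · exact Or.inr rfl
        · simp at h
    -- decompose a shortest walk; get predecessor w of v
    obtain ⟨P0, hP0⟩ := hconn.exists_walk_length_eq_dist u v
    have hlen : P0.reverse.length = n + 1 := by rw [Walk.length_reverse, hP0, hdist]
    obtain ⟨w, hvw, q0, hq0⟩ : ∃ w, ∃ hvw : G.Adj v w, ∃ q0 : G.Walk w u,
        q0.length = n := by
      cases hP0' : P0.reverse with
      | nil => rw [hP0'] at hlen; simp at hlen
      | cons h q =>
        rw [hP0'] at hlen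
        simp only [Walk.length_cons] at hlen
        exact ⟨_, h, q, by omega⟩
    have hduw : G.dist u w ≤ n := by
      have := SimpleGraph.dist_le q0.reverse
      rwa [Walk.length_reverse, hq0] at this
    have hwu : w ≠ u := by
      rintro rfl
      exact hadj hvw.symm
    have hwv : w ≠ v := hvw.ne'
    obtain ⟨A, B, hA, hB, hAB⟩ := ih u w hwu.symm hduw
    by_cases hvA : v ∈ A.support
    · exact auxIn A B hA hB hAB (Ne.symm huv) hwv.symm hvA
    by_cases hvB : v ∈ B.support
    · obtain ⟨p, q, hp, hq, hpq⟩ := auxIn B A hB hA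
        (fun x h1 h2 => hAB x h2 h1) (Ne.symm huv) hwv.symm hvB
      exact ⟨p, q, hp, hq, hpq⟩
    -- main case
    obtain ⟨P1, hP1w⟩ := exists_walk_avoid hG hwu.symm hwv.symm
    set P : G.Walk u v := P1.bypass with hP
    have hPw : w ∉ P.support := fun h => hP1w (P1.support_bypass_subset h)
    obtain ⟨y, hy, r0, hr0T, hr0sub⟩ :=
      last_in_set {x | x ∈ A.support ∨ x ∈ B.support} P
    have hyT : y ∈ A.support ∨ y ∈ B.support := by
      rcases hy with h | rfl
      · exact h
      · exact Or.inl A.start_mem_support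
    set r : G.Walk y v := r0.bypass with hr
    have hrpath : r.IsPath := r0.bypass_isPath
    have hrsub : ∀ x ∈ r.support, x ∈ P.support :=
      fun x hx => hr0sub x (r0.support_bypass_subset hx)
    have hrT : ∀ x ∈ r.support, (x ∈ A.support ∨ x ∈ B.support) → x = y :=
      fun x hx h => hr0T x (r0.support_bypass_subset hx) h
    have hwr : w ∉ r.support := fun h => hPw (hrsub w h)
    have hyw : y ≠ w := by
      rintro rfl
      exact hPw (hrsub y r.start_mem_support)
    rcases hyT with hyA | hyB
    · exact auxOut A B hA hB hAB hvw.symm hvA hvB hyA hyw r hrpath hrT hwr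
    · exact auxOut B A hB hA (fun x h1 h2 => hAB x h2 h1) hvw.symm hvB hvA hyB hyw r
        hrpath (fun x hx h => hrT x hx h.symm) hwr

/-- The bad case: both truncated arcs end at the same vertex of `S`. -/
lemma fanBad [DecidableEq V] {v s₁ s' y : V} {S : Set V} (hv : v ∉ S) (hs₁ : s₁ ∈ S)
    (A B : G.Walk v s₁) (hA : A.IsPath) (hB : B.IsPath)
    (hAB : ∀ x, x ∈ A.support → x ∈ B.support → x = v ∨ x = s₁)
    (hAS : ∀ x ∈ A.support, x ∈ S → x = s₁) (hBS : ∀ x ∈ B.support, x ∈ S → x = s₁)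
    (hs' : s' ∈ S) (hs's₁ : s' ≠ s₁) (r : G.Walk y s') (hr : r.IsPath)
    (hyA : y ∈ A.support) (hys₁ : y ≠ s₁)
    (hrT : ∀ x ∈ r.support, (x ∈ A.support ∨ x ∈ B.support) → x = y)
    (hrS : ∀ x ∈ r.support, x ∈ S → x = s') :
    ∃ t₁ ∈ S, ∃ t₂ ∈ S, t₁ ≠ t₂ ∧
      ∃ (p₁ : G.Walk v t₁) (p₂ : G.Walk v t₂), p₁.IsPath ∧ p₂.IsPath ∧
        {x | x ∈ p₁.support} ∩ {x | x ∈ p₂.support} = {v} ∧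
        (∀ x ∈ p₁.support, x ∈ S → x = t₁) ∧
        (∀ x ∈ p₂.support, x ∈ S → x = t₂) := by
  have hnotake : s₁ ∉ (A.takeUntil y hyA).support := by
    intro h
    exact hys₁ (takeUntil_dropUntil_inter hA hyA s₁ h
      (A.dropUntil y hyA).end_mem_support).symm
  refine ⟨s₁, hs₁, s', hs', hs's₁.symm, B, (A.takeUntil y hyA).append r, hB, ?_, ?_, hBS, ?_⟩
  · refine path_append (hA.takeUntil hyA) hr ?_
    intro x hxT hxr
    exact hrT x hxr (Or.inl (A.support_takeUntil_subset hyA hxT))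
  · ext x
    simp only [Set.mem_inter_iff, Set.mem_setOf_eq, Set.mem_singleton_iff]
    constructor
    · rintro ⟨hxB, hxP⟩
      rw [Walk.mem_support_append_iff] at hxP
      rcases hxP with hxT | hxr
      · rcases hAB x (A.support_takeUntil_subset hyA hxT) hxB with rfl | rfl
        · rfl
        · exact absurd hxT hnotake
      · have := hrT x hxr (Or.inr hxB)
        subst this
        rcases hAB x hyA hxB with rfl | rfl
        · rfl
        · exact absurd rfl hys₁
    · rintro rfl
      exact ⟨B.start_mem_support, by
        rw [Walk.mem_support_append_iff]
        exact Or.inl (A.takeUntil y hyA).start_mem_support⟩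
  · intro x hx hxS
    rw [Walk.mem_support_append_iff] at hx
    rcases hx with hxT | hxr
    · exact absurd ((hAS x (A.support_takeUntil_subset hyA hxT) hxS) ▸ hxT) hnotake
    · exact hrS x hxr hxS

end FanAux

open FanAux SimpleGraph Walk in
/-- Fan lemma for `k = 2`: in a 2-vertex-connected graph, given a vertex `v` and a
set `S` (not containing `v`) with at least 2 elements, there are two paths from `v`
to two distinct vertices of `S`, vertex-disjoint except at `v`, whose internal
vertices avoid `S`. -/
theorem twoConnected_fan {V : Type*} [Finite V]
    (G : SimpleGraph V) (hG : TwoConnected G) (v : V) (S : Set V)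
    (hv : v ∉ S) (hS : 2 ≤ S.ncard) :
    ∃ s₁ ∈ S, ∃ s₂ ∈ S, s₁ ≠ s₂ ∧
      ∃ (p₁ : G.Walk v s₁) (p₂ : G.Walk v s₂), p₁.IsPath ∧ p₂.IsPath ∧
        {x | x ∈ p₁.support} ∩ {x | x ∈ p₂.support} = {v} ∧
        (∀ x ∈ p₁.support, x ∈ S → x = s₁) ∧
        (∀ x ∈ p₂.support, x ∈ S → x = s₂) := by
  classical
  obtain ⟨s₁, hs₁, t, ht, hst⟩ := (Set.one_lt_ncard (Set.toFinite S)).mp (by omega)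
  have hvs₁ : v ≠ s₁ := fun h => hv (h ▸ hs₁)
  obtain ⟨A₀, B₀, hA₀, hB₀, hAB₀⟩ :=
    thmA hG (G.dist v s₁) v s₁ hvs₁ le_rfl
  obtain ⟨a, ha, A, hA, hAS, hAsub⟩ := trunc A₀ hA₀ hv hs₁
  obtain ⟨b, hb, B, hB, hBS, hBsub⟩ := trunc B₀ hB₀ hv hs₁
  by_cases hab : a ≠ b
  · refine ⟨a, ha, b, hb, hab, A, B, hA, hB, ?_, hAS, hBS⟩
    ext x
    simp only [Set.mem_inter_iff, Set.mem_setOf_eq, Set.mem_singleton_iff]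
    constructor
    · rintro ⟨hxA, hxB⟩
      rcases hAB₀ x (hAsub x hxA) (hBsub x hxB) with rfl | rfl
      · rfl
      · exact absurd ((hAS x hxA hs₁) ▸ (hBS x hxB hs₁)) hab
    · rintro rfl
      exact ⟨A.start_mem_support, B.start_mem_support⟩
  push_neg at hab
  subst hab
  -- both truncations end at `a`; show `a = s₁`
  have has₁ : a = s₁ := by
    rcases hAB₀ a (hAsub a A.end_mem_support) (hBsub a B.end_mem_support) with h | h
    · exact absurd (h ▸ ha) hv
    · exact h
  subst has₁
  -- find a path from `v` to another vertex of `S` avoiding `a`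
  obtain ⟨s₂, hs₂, hs₂a⟩ : ∃ s₂ ∈ S, s₂ ≠ a := by
    rcases eq_or_ne t a with rfl | h
    · exact absurd rfl hst
    · exact ⟨t, ht, h⟩
  obtain ⟨R₀, hR₀⟩ := exists_walk_avoid hG hvs₁ hs₂a
  have hR₀' : a ∉ R₀.bypass.support := fun h => hR₀ (R₀.support_bypass_subset h)
  obtain ⟨s', hs', R₁, hR₁, hR₁S, hR₁sub⟩ := trunc R₀.bypass (R₀.bypass_isPath) hv hs₂
  have hR₁a : a ∉ R₁.support := fun h => hR₀' (hR₁sub a h)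
  have hs'a : s' ≠ a := fun h => hR₁a (h ▸ R₁.end_mem_support)
  obtain ⟨y, hy, r0, hr0T, hr0sub⟩ :=
    last_in_set {x | x ∈ A.support ∨ x ∈ B.support} R₁
  have hyT : y ∈ A.support ∨ y ∈ B.support := by
    rcases hy with h | rfl
    · exact h
    · exact Or.inl A.start_mem_support
  have hrpath : r0.bypass.IsPath := r0.bypass_isPath
  have hrsub : ∀ x ∈ r0.bypass.support, x ∈ R₁.support :=
    fun x hx => hr0sub x (r0.support_bypass_subset hx)
  have hrT : ∀ x ∈ r0.bypass.support, (x ∈ A.support ∨ x ∈ B.support) → x = y :=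
    fun x hx h => hr0T x (r0.support_bypass_subset hx) h
  have hrS : ∀ x ∈ r0.bypass.support, x ∈ S → x = s' :=
    fun x hx hxS => hR₁S x (hrsub x hx) hxS
  have hya : y ≠ a := by
    rintro rfl
    exact hR₁a (hrsub y r0.bypass.start_mem_support)
  have hAB : ∀ x, x ∈ A.support → x ∈ B.support → x = v ∨ x = a :=
    fun x h1 h2 => hAB₀ x (hAsub x h1) (hBsub x h2)
  rcases hyT with hyA | hyB
  · exact fanBad hv ha A B hA hB hAB hAS hBS hs' hs'a r0.bypass hrpath hyA hya hrT hrS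
  · exact fanBad hv ha B A hB hA (fun x h1 h2 => hAB x h2 h1) hBS hAS hs' hs'a
      r0.bypass hrpath hyB hya (fun x hx h => hrT x hx h.symm) hrS
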